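/- arXiv:1110.0798 — 2 statements merged into one kernel-verified Lean document; each statement's English description precedes it below -/
import Mathlib

section
/- Let a, b ∈ (0,∞) and Λ(x) = √(a|x|² + b) on ℝ². Then for any x, y ∈ ℝ², |x − y|/(1 + |x|³ + |y|³) ≲ |∇Λ(x) − ∇Λ(y)| ≲ |x − y|, with implicit constants depending only on a and b. -/
noncomputable section

open MeasureTheory Complex Filter
open scoped ENNReal FourierTransform RealInnerProductSpace

/-- The plane `ℝ²`. -/
abbrev Plane : Type := EuclideanSpace ℝ (Fin 2)

/-- The Fourier multiplier operator with symbol `m`. -/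
def fourierMult (m : Plane → ℂ) (f : Plane → ℂ) : Plane → ℂ :=
  𝓕⁻ fun ξ => m ξ * 𝓕 f ξ

/-- The symbol `Λ(ξ) = √(a|ξ|² + b)`. -/
def lamSym (a b : ℝ) (ξ : Plane) : ℝ := Real.sqrt (a * ‖ξ‖ ^ 2 + b)

/-- The operator `Λ = √(a|∇|² + b)`. -/
def LamOp (a b : ℝ) : (Plane → ℂ) → Plane → ℂ :=
  fourierMult fun ξ => (lamSym a b ξ : ℂ)

/-- The operator `Λ⁻¹`. -/
def LamInvOp (a b : ℝ) : (Plane → ℂ) → Plane → ℂ :=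
  fourierMult fun ξ => ((lamSym a b ξ : ℂ))⁻¹

/-- The operator `|∇|`, with symbol `|ξ|`. -/
def absNabla : (Plane → ℂ) → Plane → ℂ :=
  fourierMult fun ξ => (‖ξ‖ : ℂ)

/-- The partial derivative `∂_j`, as the Fourier multiplier with symbol `iξ_j`. -/
def partialD (j : Fin 2) : (Plane → ℂ) → Plane → ℂ :=
  fourierMult fun ξ => Complex.I * ((ξ j : ℝ) : ℂ)

/-- The Riesz transform `R_j = ∂_j/|∇|`, with symbol `iξ_j/|ξ|`. -/
def Riesz (j : Fin 2) : (Plane → ℂ) → Plane → ℂ :=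
  fourierMult fun ξ => Complex.I * ((ξ j : ℝ) : ℂ) / ((‖ξ‖ : ℝ) : ℂ)

/-- The linear propagator `e^{itΛ}`. -/
def eitLam (a b t : ℝ) : (Plane → ℂ) → Plane → ℂ :=
  fourierMult fun ξ => Complex.exp (Complex.I * (t : ℂ) * ((lamSym a b ξ : ℝ) : ℂ))

/-- The Laplacian `Δ`, with symbol `-|ξ|²`. -/
def lapOp : (Plane → ℂ) → Plane → ℂ :=
  fourierMult fun ξ => ((-(‖ξ‖ ^ 2) : ℝ) : ℂ)

/-- The derivative `D^α = ∂₁^{α₁}∂₂^{α₂}`, with symbol `(iξ₁)^{α₁}(iξ₂)^{α₂}`. -/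
def Dop (α : Fin 2 → ℕ) : (Plane → ℂ) → Plane → ℂ :=
  fourierMult fun ξ => ∏ j : Fin 2, (Complex.I * ((ξ j : ℝ) : ℂ)) ^ α j

/-- Pointwise complex conjugate of a function. -/
def conjF (f : Plane → ℂ) : Plane → ℂ := fun x => (starRingEnd ℂ) (f x)

/-- The quadratic nonlinearity
`(i/4)Σ_j ΛR_j[|∇|Λ⁻¹(U+Ū)·R_j(U−Ū)] + (i/8)Σ_j |∇|[R_j(U−Ū)·R_j(U−Ū)]`. -/
def nonlin (a b : ℝ) (U : Plane → ℂ) : Plane → ℂ := fun x =>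
  Complex.I / 4 *
      ∑ j : Fin 2,
        LamOp a b
          (Riesz j fun y =>
            absNabla (LamInvOp a b fun z => U z + conjF U z) y *
              Riesz j (fun z => U z - conjF U z) y) x +
    Complex.I / 8 *
      ∑ j : Fin 2,
        absNabla
          (fun y =>
            Riesz j (fun z => U z - conjF U z) y * Riesz j (fun z => U z - conjF U z) y) x

/-- The Sobolev `H^s` norm, defined on the Fourier side. -/
def sobolevNorm (s : ℝ) (f : Plane → ℂ) : ℝ≥0∞ :=
  eLpNorm (fun ξ : Plane => ((1 + ‖ξ‖ ^ 2) ^ (s / 2) : ℝ) • 𝓕 f ξ) 2 volume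

/-- `U ∈ C(I : H^s)`. -/
def ContInSobolev (s : ℝ) (I : Set ℝ) (U : ℝ → Plane → ℂ) : Prop :=
  (∀ t ∈ I, sobolevNorm s (U t) < ⊤) ∧
    ∀ t ∈ I,
      Tendsto (fun τ => sobolevNorm s fun x => U τ x - U t x) (nhdsWithin t I) (nhds 0)

/-- `U` solves `(∂_t + iΛ)U = nonlin(U)` on the time set `I`. -/
def IsSolutionOn (a b : ℝ) (I : Set ℝ) (U : ℝ → Plane → ℂ) : Prop :=
  ∀ t ∈ I, ∀ x : Plane,
    HasDerivWithinAt (fun τ => U τ x)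
      (-Complex.I * LamOp a b (U t) x + nonlin a b (U t) x) I t

/-- `U` solves the parabolic regularization `(∂_t + iΛ - εΔ)U = nonlin(U)` on `I`. -/
def IsRegSolutionOn (a b ε : ℝ) (I : Set ℝ) (U : ℝ → Plane → ℂ) : Prop :=
  ∀ t ∈ I, ∀ x : Plane,
    HasDerivWithinAt (fun τ => U τ x)
      (-Complex.I * LamOp a b (U t) x + (ε : ℂ) * lapOp (U t) x + nonlin a b (U t) x) I t

/-- `U` solves the forced equation `(∂_t + iΛ)U = F + nonlin(U)` on `I`. -/
def IsForcedSolutionOn (a b : ℝ) (I : Set ℝ) (U F : ℝ → Plane → ℂ) : Prop :=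
  ∀ t ∈ I, ∀ x : Plane,
    HasDerivWithinAt (fun τ => U τ x)
      (-Complex.I * LamOp a b (U t) x + nonlin a b (U t) x + F t x) I t

/-- An admissible Littlewood–Paley cutoff: even, smooth, `[0,1]`-valued, supported in
`[-8/5, 8/5]` and equal to `1` on `[-5/4, 5/4]`. -/
structure IsAdmissibleCutoff (φ : ℝ → ℝ) : Prop where
  smooth : ContDiff ℝ (⊤ : ℕ∞) φ
  even : ∀ x, φ (-x) = φ x
  mem_Icc : ∀ x, φ x ∈ Set.Icc (0 : ℝ) 1
  eq_zero : ∀ x : ℝ, 8 / 5 < |x| → φ x = 0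
  eq_one : ∀ x : ℝ, |x| ≤ 5 / 4 → φ x = 1

/-- The dyadic piece `φ_k(r) = φ(|r|/2^k) - φ(|r|/2^{k-1})`. -/
def phiLP (φ : ℝ → ℝ) (k : ℤ) (r : ℝ) : ℝ :=
  φ (|r| / 2 ^ k) - φ (|r| / 2 ^ (k - 1))

/-- `φ_I = Σ_{m ∈ I ∩ ℤ} φ_m` for an interval of integers `[m, n]`. -/
def phiSum (φ : ℝ → ℝ) (m n : ℤ) (r : ℝ) : ℝ :=
  ∑ k ∈ Finset.Icc m n, phiLP φ k r

/-- The Littlewood–Paley projection `P_k`. -/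
def Pk (φ : ℝ → ℝ) (k : ℤ) : (Plane → ℂ) → Plane → ℂ :=
  fourierMult fun ξ => ((phiLP φ k ‖ξ‖ : ℝ) : ℂ)

/-- The `Z` norm. -/
def zNorm (φ : ℝ → ℝ) (f : Plane → ℂ) : ℝ≥0∞ :=
  ⨆ k : ℤ,
    ENNReal.ofReal ((2 : ℝ) ^ ((k : ℝ) / 10) + (2 : ℝ) ^ (10 * (k : ℝ))) *
      (eLpNorm (Pk φ k f) 2 volume +
        ∑' j : ℕ,
          ENNReal.ofReal ((2 : ℝ) ^ (j : ℕ)) *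
            eLpNorm (fun x : Plane => phiLP φ (j : ℤ) ‖x‖ • Pk φ k f x) 2 volume)

/-- The `Y^{N₀}` norm, `‖f‖_{H^{N₀}} + ‖f‖_Z`. -/
def yNorm (φ : ℝ → ℝ) (s : ℝ) (f : Plane → ℂ) : ℝ≥0∞ :=
  sobolevNorm s f + zNorm φ f

/-- The `Z'` norm. -/
def z'Norm (φ : ℝ → ℝ) (f : Plane → ℂ) : ℝ≥0∞ :=
  ⨆ k : ℤ,
    ENNReal.ofReal ((2 : ℝ) ^ ((k : ℝ) / 2) + (2 : ℝ) ^ (2 * (k : ℝ))) *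
      eLpNorm (Pk φ k f) ⊤ volume

/-- The `X^N_T` norm. -/
def xNorm (φ : ℝ → ℝ) (a b N N₀ δ T : ℝ) (U : ℝ → Plane → ℂ) : ℝ≥0∞ :=
  (⨆ t : Set.Icc (0 : ℝ) T,
      ENNReal.ofReal ((1 + (t : ℝ)) ^ (-δ)) * sobolevNorm N (U (t : ℝ))) +
    ⨆ t : Set.Icc (0 : ℝ) T, yNorm φ N₀ (eitLam a b (t : ℝ) (U (t : ℝ)))

/-- Membership in the space `X^N_T`. -/
def MemXNT (φ : ℝ → ℝ) (a b N N₀ δ T : ℝ) (U : ℝ → Plane → ℂ) : Prop :=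
  ContInSobolev N (Set.Icc 0 T) U ∧
    (∀ t ∈ Set.Icc (0 : ℝ) T,
      Tendsto
        (fun τ => yNorm φ N₀ fun x => eitLam a b τ (U τ) x - eitLam a b t (U t) x)
        (nhdsWithin t (Set.Icc 0 T)) (nhds 0)) ∧
    xNorm φ a b N N₀ δ T U < ⊤

/-- Real part of a complex operator applied to (the complexification of) a real function. -/
def opRe (T : (Plane → ℂ) → Plane → ℂ) (g : Plane → ℝ) : Plane → ℝ := fun x =>
  (T (fun y => ((g y : ℝ) : ℂ)) x).re

/-- The energy `E_P` associated with `P = D^α`. -/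
def energyP (a b : ℝ) (α : Fin 2 → ℕ) (U : Plane → ℂ) : ℝ :=
  (∫ x : Plane, Complex.normSq (Dop α U x)) -
    1 / 8 *
      ∑ j : Fin 2,
        ∫ x : Plane,
          (absNabla (LamInvOp a b fun z => U z + conjF U z) x *
              (Riesz j (Dop α fun z => U z - conjF U z) x *
                Riesz j (Dop α fun z => U z - conjF U z) x)).re

/-- The total energy `E_σ = Σ_{|α| ≤ σ} E_P`. -/
def energyE (a b : ℝ) (σ : ℕ) (U : Plane → ℂ) : ℝ :=
  ∑ p ∈ (Finset.range (σ + 1) ×ˢ Finset.range (σ + 1)).filter fun p => p.1 + p.2 ≤ σ,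
    energyP a b ![p.1, p.2] U

/-- The difference energy `E_P^δ` from Lemma 3.2. -/
def energyDelta (a b : ℝ) (α : Fin 2 → ℕ) (U' Uδ : Plane → ℂ) : ℝ :=
  (∫ x : Plane,
      (opRe (Dop α) (fun y => (Uδ y).re) x) ^ 2 + (opRe (Dop α) (fun y => (Uδ y).im) x) ^ 2) +
    ∑ j : Fin 2,
      ∫ x : Plane,
        opRe (fun h => absNabla (LamInvOp a b h)) (fun y => (U' y).re) x *
          (opRe (fun h => Riesz j (Dop α h)) (fun y => (Uδ y).im) x) ^ 2

/-- The difference energy `E^δ_{Id}`. -/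
def energyDeltaId (a b : ℝ) (U' Uδ : Plane → ℂ) : ℝ :=
  (∫ x : Plane, (Uδ x).re ^ 2 + (Uδ x).im ^ 2) +
    ∑ j : Fin 2,
      ∫ x : Plane,
        opRe (fun h => absNabla (LamInvOp a b h)) (fun y => (U' y).re) x *
          (opRe (Riesz j) (fun y => (Uδ y).im) x) ^ 2

/-- The quadratic symbol `m_{++}`. -/
def mpp (a b c₀ : ℝ) (ξ η : Plane) : ℂ :=
  (c₀ : ℂ) * Complex.I *
    (((-(lamSym a b ξ) * ‖ξ - η‖ * ⟪ξ, η⟫) / (4 * lamSym a b (ξ - η) * ‖ξ‖ * ‖η‖) +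
          (-‖ξ‖ * ⟪η, ξ - η⟫) / (8 * ‖η‖ * ‖ξ - η‖) : ℝ) : ℂ)

/-- The quadratic symbol `m_{+-}`. -/
def mpm (a b c₀ : ℝ) (ξ η : Plane) : ℂ :=
  (c₀ : ℂ) * Complex.I *
    (((-(lamSym a b ξ) * ‖η‖ * ⟪ξ, ξ - η⟫) / (4 * lamSym a b η * ‖ξ‖ * ‖ξ - η‖) +
          (lamSym a b ξ * ‖ξ - η‖ * ⟪ξ, η⟫) / (4 * lamSym a b (ξ - η) * ‖ξ‖ * ‖η‖) +
          (‖ξ‖ * ⟪η, ξ - η⟫) / (4 * ‖η‖ * ‖ξ - η‖) : ℝ) : ℂ)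

/-- The quadratic symbol `m_{--}`. -/
def mmm (a b c₀ : ℝ) (ξ η : Plane) : ℂ :=
  (c₀ : ℂ) * Complex.I *
    (((lamSym a b ξ * ‖ξ - η‖ * ⟪ξ, η⟫) / (4 * lamSym a b (ξ - η) * ‖ξ‖ * ‖η‖) +
          (-‖ξ‖ * ⟪η, ξ - η⟫) / (8 * ‖η‖ * ‖ξ - η‖) : ℝ) : ℂ)

/-- `m'_{--}(v,w) = conj(m_{++}(-v,-w))`. -/
def m'mm (a b c₀ : ℝ) (v w : Plane) : ℂ := (starRingEnd ℂ) (mpp a b c₀ (-v) (-w))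

/-- `m'_{-+}(v,w) = conj(m_{+-}(-v,-w))`. -/
def m'mp (a b c₀ : ℝ) (v w : Plane) : ℂ := (starRingEnd ℂ) (mpm a b c₀ (-v) (-w))

/-- `m'_{++}(v,w) = conj(m_{--}(-v,-w))`. -/
def m'pp (a b c₀ : ℝ) (v w : Plane) : ℂ := (starRingEnd ℂ) (mmm a b c₀ (-v) (-w))

/-- The phase `Φ_{++}(ξ,η) = Λ(ξ) - Λ(ξ-η) - Λ(η)`. -/
def PhiPP (a b : ℝ) (ξ η : Plane) : ℝ := lamSym a b ξ - lamSym a b (ξ - η) - lamSym a b η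

/-- The phase `Φ_{+-}(ξ,η) = Λ(ξ) - Λ(ξ-η) + Λ(η)`. -/
def PhiPM (a b : ℝ) (ξ η : Plane) : ℝ := lamSym a b ξ - lamSym a b (ξ - η) + lamSym a b η

/-- The phase `Φ_{--}(ξ,η) = Λ(ξ) + Λ(ξ-η) + Λ(η)`. -/
def PhiMM (a b : ℝ) (ξ η : Plane) : ℝ := lamSym a b ξ + lamSym a b (ξ - η) + lamSym a b η

/-- The cubic symbol `m_{+++}`. -/
def m3ppp (a b c₀ : ℝ) (ξ η χ : Plane) : ℂ :=
  mpp a b c₀ ξ χ * mpp a b c₀ (ξ - χ) (η - χ) / ((PhiPP a b ξ χ : ℝ) : ℂ) +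
    mpp a b c₀ ξ η * mpp a b c₀ η χ / ((PhiPP a b ξ η : ℝ) : ℂ) +
    mpm a b c₀ ξ η * m'pp a b c₀ η χ / ((PhiPM a b ξ η : ℝ) : ℂ)

/-- The cubic symbol `m_{++-}`. -/
def m3ppm (a b c₀ : ℝ) (ξ η χ : Plane) : ℂ :=
  mpp a b c₀ ξ (ξ - η) * mpm a b c₀ η χ / ((PhiPP a b ξ (ξ - η) : ℝ) : ℂ) +
    mpp a b c₀ ξ η * mpm a b c₀ η χ / ((PhiPP a b ξ η : ℝ) : ℂ) +
    mpm a b c₀ ξ χ * mpp a b c₀ (ξ - χ) (η - χ) / ((PhiPM a b ξ χ : ℝ) : ℂ) +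
    mpm a b c₀ ξ η * m'mp a b c₀ η (η - χ) / ((PhiPM a b ξ η : ℝ) : ℂ) +
    mmm a b c₀ ξ χ * m'pp a b c₀ (ξ - χ) (ξ - η) / ((PhiMM a b ξ χ : ℝ) : ℂ) +
    mmm a b c₀ ξ (ξ - χ) * m'pp a b c₀ (ξ - χ) (ξ - η) / ((PhiMM a b ξ (ξ - χ) : ℝ) : ℂ)

/-- The cubic symbol `m_{+--}`. -/
def m3pmm (a b c₀ : ℝ) (ξ η χ : Plane) : ℂ :=
  mpp a b c₀ ξ (ξ - η) * mmm a b c₀ η χ / ((PhiPP a b ξ (ξ - η) : ℝ) : ℂ) +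
    mpp a b c₀ ξ η * mmm a b c₀ η χ / ((PhiPP a b ξ η : ℝ) : ℂ) +
    mpm a b c₀ ξ χ * mpm a b c₀ (ξ - χ) (η - χ) / ((PhiPM a b ξ χ : ℝ) : ℂ) +
    mpm a b c₀ ξ η * m'mm a b c₀ η (η - χ) / ((PhiPM a b ξ η : ℝ) : ℂ) +
    mmm a b c₀ ξ χ * m'mp a b c₀ (ξ - χ) (ξ - η) / ((PhiMM a b ξ χ : ℝ) : ℂ) +
    mmm a b c₀ ξ (ξ - χ) * m'mp a b c₀ (ξ - χ) (ξ - η) / ((PhiMM a b ξ (ξ - χ) : ℝ) : ℂ)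

/-- The cubic symbol `m_{---}`. -/
def m3mmm (a b c₀ : ℝ) (ξ η χ : Plane) : ℂ :=
  mpm a b c₀ ξ χ * mmm a b c₀ (ξ - χ) (η - χ) / ((PhiPM a b ξ χ : ℝ) : ℂ) +
    mmm a b c₀ ξ χ * m'mm a b c₀ (ξ - χ) (η - χ) / ((PhiMM a b ξ χ : ℝ) : ℂ) +
    mmm a b c₀ ξ η * m'mm a b c₀ η χ / ((PhiMM a b ξ η : ℝ) : ℂ)

/-- The normal-form profile `Ŵ(ξ,t)` on the Fourier side. -/
def WhatF (a b c₀ : ℝ) (U : ℝ → Plane → ℂ) (t : ℝ) (ξ : Plane) : ℂ :=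
  Complex.exp (Complex.I * (t : ℂ) * ((lamSym a b ξ : ℝ) : ℂ)) * 𝓕 (U t) ξ +
    Complex.I * Complex.exp (Complex.I * (t : ℂ) * ((lamSym a b ξ : ℝ) : ℂ)) *
      ∫ η : Plane,
        mpp a b c₀ ξ η / ((PhiPP a b ξ η : ℝ) : ℂ) * 𝓕 (U t) (ξ - η) * 𝓕 (U t) η +
          mpm a b c₀ ξ η / ((PhiPM a b ξ η : ℝ) : ℂ) * 𝓕 (U t) (ξ - η) * 𝓕 (conjF (U t)) η +
          mmm a b c₀ ξ η / ((PhiMM a b ξ η : ℝ) : ℂ) * 𝓕 (conjF (U t)) (ξ - η) *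
            𝓕 (conjF (U t)) η


/-! ### Auxiliary lemmas for `lam_grad_diff_bounds` -/

private lemma lamAux_ident (a b r s L S : ℝ)
    (hL2 : L ^ 2 = a * r ^ 2 + b) (hS2 : S ^ 2 = a * s ^ 2 + b)
    (hL : L ≠ 0) (hS : S ≠ 0) :
    (a * r / L - a * s / S) * (L * S * (r * S + s * L)) = a * b * (r - s) * (r + s) := by
  have h : a * (r * S - s * L) * (r * S + s * L) = a * b * (r - s) * (r + s) := by
    linear_combination a * r ^ 2 * hS2 - a * s ^ 2 * hL2
  have e : (a * r / L - a * s / S) * (L * S) = a * (r * S - s * L) := by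
    field_simp
  calc (a * r / L - a * s / S) * (L * S * (r * S + s * L))
      = (a * r / L - a * s / S) * (L * S) * (r * S + s * L) := by ring
    _ = a * (r * S - s * L) * (r * S + s * L) := by rw [e]
    _ = a * b * (r - s) * (r + s) := h

private lemma lamAux_decomp (a r s ι L S : ℝ) (hL : L ≠ 0) (hS : S ≠ 0) :
    (a * r / L) ^ 2 + (a * s / S) ^ 2 - 2 * (a ^ 2 / (L * S)) * ι
      = (a * r / L - a * s / S) ^ 2 + 2 * (a ^ 2 / (L * S)) * (r * s - ι) := by
  field_simp
  ring

set_option maxHeartbeats 1000000 in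
private lemma lamAux_key_lower (a b r s ι L S T : ℝ) (ha : 0 < a) (hb : 0 < b)
    (hr : 0 ≤ r) (hs : 0 ≤ s) (hι : ι ≤ r * s)
    (hL2 : L ^ 2 = a * r ^ 2 + b) (hS2 : S ^ 2 = a * s ^ 2 + b)
    (hT2 : T ^ 2 = a * (max r s) ^ 2 + b)
    (hL : 0 < L) (hS : 0 < S) (hT : 0 < T) :
    (a * b / T ^ 3) ^ 2 * (r ^ 2 + s ^ 2 - 2 * ι) ≤
      (a * r / L) ^ 2 + (a * s / S) ^ 2 - 2 * (a ^ 2 / (L * S)) * ι := by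
  have hLT : L ≤ T := by
    have h2 : L ^ 2 ≤ T ^ 2 := by
      rw [hL2, hT2]
      nlinarith [pow_le_pow_left₀ hr (le_max_left r s) 2]
    exact (pow_le_pow_iff_left₀ hL.le hT.le two_ne_zero).mp h2
  have hST : S ≤ T := by
    have h2 : S ^ 2 ≤ T ^ 2 := by
      rw [hS2, hT2]
      nlinarith [pow_le_pow_left₀ hs (le_max_right r s) 2]
    exact (pow_le_pow_iff_left₀ hS.le hT.le two_ne_zero).mp h2
  have hbT : b ≤ T ^ 2 := by nlinarith [sq_nonneg (max r s)]
  have hrsι : 0 ≤ r * s - ι := by linarith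
  rw [lamAux_decomp a r s ι L S hL.ne' hS.ne',
    show (a * b / T ^ 3) ^ 2 * (r ^ 2 + s ^ 2 - 2 * ι)
      = (a * b / T ^ 3) ^ 2 * (r - s) ^ 2 + 2 * ((a * b / T ^ 3) ^ 2) * (r * s - ι) by ring]
  have hcoef : (a * b / T ^ 3) ^ 2 ≤ a ^ 2 / (L * S) := by
    rw [div_pow, div_le_div_iff₀ (by positivity) (by positivity)]
    have h1 : b * b ≤ T ^ 2 * T ^ 2 := mul_le_mul hbT hbT hb.le (by positivity)
    have h2 : L * S ≤ T * T := mul_le_mul hLT hST hS.le hT.le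
    nlinarith [mul_le_mul h1 h2 (by positivity) (by positivity), sq_nonneg a]
  have piece2 : 2 * ((a * b / T ^ 3) ^ 2) * (r * s - ι) ≤ 2 * (a ^ 2 / (L * S)) * (r * s - ι) := by
    nlinarith [mul_le_mul_of_nonneg_right hcoef hrsι]
  have piece1 : (a * b / T ^ 3) ^ 2 * (r - s) ^ 2 ≤ (a * r / L - a * s / S) ^ 2 := by
    rcases eq_or_ne r s with hrs' | hrs'
    · rw [hrs']
      nlinarith [sq_nonneg (a * s / L - a * s / S)]
    · have hrspos : 0 < r + s := by rcases hrs'.lt_or_gt with h | h <;> nlinarith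
      have hrsL : 0 < r * S + s * L := by
        rcases hrs'.lt_or_gt with h | h
        · have hs' : 0 < s := by linarith
          nlinarith [mul_pos hs' hL, mul_nonneg hr hS.le]
        · have hr' : 0 < r := by linarith
          nlinarith [mul_pos hr' hS, mul_nonneg hs hL.le]
      have hIdent := lamAux_ident a b r s L S hL2 hS2 hL.ne' hS.ne'
      have hDle : L * S * (r * S + s * L) ≤ T ^ 3 * (r + s) := by
        have h2 : L * S ≤ T * T := mul_le_mul hLT hST hS.le hT.le
        have h3 : r * S + s * L ≤ (r + s) * T := by
          nlinarith [mul_le_mul_of_nonneg_left hST hr, mul_le_mul_of_nonneg_left hLT hs]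
        nlinarith [mul_le_mul h2 h3 hrsL.le (by positivity)]
      have h4 : (a * b * (r - s) * (r + s)) ^ 2
          ≤ (a * r / L - a * s / S) ^ 2 * (T ^ 3 * (r + s)) ^ 2 := by
        calc (a * b * (r - s) * (r + s)) ^ 2
            = (a * r / L - a * s / S) ^ 2 * (L * S * (r * S + s * L)) ^ 2 := by
              rw [← hIdent]; ring
          _ ≤ _ :=
              mul_le_mul_of_nonneg_left (pow_le_pow_left₀ (by positivity) hDle 2) (sq_nonneg _)
      rw [div_pow, div_mul_eq_mul_div, div_le_iff₀ (by positivity)]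
      nlinarith [h4, mul_pos hrspos hrspos]
  linarith

set_option maxHeartbeats 1000000 in
private lemma lamAux_key_upper (a b r s ι L S : ℝ) (ha : 0 < a) (hb : 0 < b)
    (hr : 0 ≤ r) (hs : 0 ≤ s) (hι : ι ≤ r * s)
    (hL2 : L ^ 2 = a * r ^ 2 + b) (hS2 : S ^ 2 = a * s ^ 2 + b)
    (hL : 0 < L) (hS : 0 < S) :
    (a * r / L) ^ 2 + (a * s / S) ^ 2 - 2 * (a ^ 2 / (L * S)) * ι
      ≤ a ^ 2 / b * (r ^ 2 + s ^ 2 - 2 * ι) := by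
  have hbL : b ≤ L ^ 2 := by nlinarith [sq_nonneg r]
  have hbS : b ≤ S ^ 2 := by nlinarith [sq_nonneg s]
  have hbLS : b ≤ L * S := by nlinarith [mul_pos hL hS]
  have hrsι : 0 ≤ r * s - ι := by linarith
  rw [lamAux_decomp a r s ι L S hL.ne' hS.ne',
    show a ^ 2 / b * (r ^ 2 + s ^ 2 - 2 * ι)
      = a ^ 2 / b * (r - s) ^ 2 + 2 * (a ^ 2 / b) * (r * s - ι) by ring]
  have hcoef : a ^ 2 / (L * S) ≤ a ^ 2 / b :=
    div_le_div_of_nonneg_left (by positivity) hb hbLS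
  have piece2 : 2 * (a ^ 2 / (L * S)) * (r * s - ι) ≤ 2 * (a ^ 2 / b) * (r * s - ι) := by
    nlinarith [mul_le_mul_of_nonneg_right hcoef hrsι]
  have piece1 : (a * r / L - a * s / S) ^ 2 ≤ a ^ 2 / b * (r - s) ^ 2 := by
    rcases eq_or_ne r s with hrs' | hrs'
    · have hLSeq : L = S := by
        have h2 : L ^ 2 = S ^ 2 := by rw [hL2, hS2, hrs']
        rw [← Real.sqrt_sq hL.le, ← Real.sqrt_sq hS.le, h2]
      rw [hrs', hLSeq, sub_self, sub_self]
      norm_num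
    · have hrspos : 0 < r + s := by rcases hrs'.lt_or_gt with h | h <;> nlinarith
      have hIdent := lamAux_ident a b r s L S hL2 hS2 hL.ne' hS.ne'
      have hsq : b * (r + s) ^ 2 ≤ (r * S + s * L) ^ 2 := by
        nlinarith [mul_le_mul_of_nonneg_left hbS (mul_self_nonneg r),
          mul_le_mul_of_nonneg_left hbL (mul_self_nonneg s),
          mul_le_mul_of_nonneg_left hbLS (mul_nonneg hr hs)]
      have hD2 : b ^ 2 * (b * (r + s) ^ 2) ≤ (L * S * (r * S + s * L)) ^ 2 := by
        have h1 : b ^ 2 ≤ (L * S) ^ 2 := by nlinarith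
        calc b ^ 2 * (b * (r + s) ^ 2) ≤ (L * S) ^ 2 * ((r * S + s * L) ^ 2) :=
              mul_le_mul h1 hsq (by positivity) (by positivity)
          _ = (L * S * (r * S + s * L)) ^ 2 := by ring
      have hId2 : ((a * r / L - a * s / S) * (L * S * (r * S + s * L))) ^ 2
          = (a * b * (r - s) * (r + s)) ^ 2 := by rw [hIdent]
      rw [div_mul_eq_mul_div, le_div_iff₀ hb]
      nlinarith [hId2, mul_le_mul_of_nonneg_left hD2 (sq_nonneg (a * r / L - a * s / S)),
        mul_pos (mul_pos hb hb) (mul_pos hrspos hrspos)]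
  linarith

private lemma lamSym_hasFDerivAt (a b : ℝ) (ha : 0 < a) (hb : 0 < b) (v : Plane) :
    HasFDerivAt (lamSym a b)
      ((a / Real.sqrt (a * ‖v‖ ^ 2 + b)) • (innerSL ℝ v : Plane →L[ℝ] ℝ)) v := by
  have hv : 0 < a * ‖v‖ ^ 2 + b := by positivity
  have h0 : HasFDerivAt (fun w : Plane => ‖w‖ ^ 2) (2 • (innerSL ℝ v : Plane →L[ℝ] ℝ)) v := by
    simpa using (hasFDerivAt_id v).norm_sq
  have h1 : HasFDerivAt (fun w : Plane => a * ‖w‖ ^ 2 + b)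
      ((2 * a) • (innerSL ℝ v : Plane →L[ℝ] ℝ)) v := by
    have h' := (h0.const_mul a).add_const b
    have heq : a • (2 • (innerSL ℝ v : Plane →L[ℝ] ℝ))
        = (2 * a) • (innerSL ℝ v : Plane →L[ℝ] ℝ) := by
      ext w
      simp [two_smul]
      ring
    rwa [heq] at h'
  have h2 := h1.sqrt hv.ne'
  have heq2 : (1 / (2 * Real.sqrt (a * ‖v‖ ^ 2 + b))) •
        ((2 * a) • (innerSL ℝ v : Plane →L[ℝ] ℝ))
      = (a / Real.sqrt (a * ‖v‖ ^ 2 + b)) • (innerSL ℝ v : Plane →L[ℝ] ℝ) := by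
    rw [smul_smul]
    congr 1
    have hsq : Real.sqrt (a * ‖v‖ ^ 2 + b) ≠ 0 := by positivity
    field_simp
  rw [heq2] at h2
  exact h2

set_option maxHeartbeats 1000000 in
/-- two-sided bounds for `|∇Λ(x) - ∇Λ(y)|`. -/
theorem lam_grad_diff_bounds (a b : ℝ) (ha : 0 < a) (hb : 0 < b) :
    ∃ C : ℝ, 0 < C ∧
      ∀ x y : Plane,
        ‖x - y‖ / (1 + ‖x‖ ^ 3 + ‖y‖ ^ 3) ≤ C * ‖fderiv ℝ (lamSym a b) x - fderiv ℝ (lamSym a b) y‖ ∧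
          ‖fderiv ℝ (lamSym a b) x - fderiv ℝ (lamSym a b) y‖ ≤ C * ‖x - y‖ := by
  classical
  set Clow : ℝ := 4 * (a + b + 1) ^ 3 / (a * b) with hClow
  set Cup : ℝ := a / b + a with hCup
  refine ⟨Clow + Cup, by positivity, fun x y => ?_⟩
  set r : ℝ := ‖x‖ with hrdef
  set s : ℝ := ‖y‖ with hsdef
  have hr : 0 ≤ r := norm_nonneg x
  have hs : 0 ≤ s := norm_nonneg y
  set L : ℝ := Real.sqrt (a * r ^ 2 + b) with hLdef
  set S : ℝ := Real.sqrt (a * s ^ 2 + b) with hSdef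
  set T : ℝ := Real.sqrt (a * (max r s) ^ 2 + b) with hTdef
  have hL : 0 < L := Real.sqrt_pos.mpr (by positivity)
  have hS : 0 < S := Real.sqrt_pos.mpr (by positivity)
  have hT : 0 < T := Real.sqrt_pos.mpr (by positivity)
  have hL2 : L ^ 2 = a * r ^ 2 + b := Real.sq_sqrt (by positivity)
  have hS2 : S ^ 2 = a * s ^ 2 + b := Real.sq_sqrt (by positivity)
  have hT2 : T ^ 2 = a * (max r s) ^ 2 + b := Real.sq_sqrt (by positivity)
  set ι : ℝ := ⟪x, y⟫ with hιdef
  have hι : ι ≤ r * s := real_inner_le_norm x y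
  set g : Plane → Plane := fun v => (a / Real.sqrt (a * ‖v‖ ^ 2 + b)) • v with hgdef
  have hfd : ∀ v : Plane, fderiv ℝ (lamSym a b) v = innerSL ℝ (g v) := by
    intro v
    rw [(lamSym_hasFDerivAt a b ha hb v).fderiv]
    ext w
    simp [hgdef, real_inner_smul_left]
  have hDnorm : ‖fderiv ℝ (lamSym a b) x - fderiv ℝ (lamSym a b) y‖ = ‖g x - g y‖ := by
    rw [hfd x, hfd y, ← map_sub, innerSL_apply_norm]
  have hgnorm2 : ‖g x - g y‖ ^ 2
      = (a * r / L) ^ 2 + (a * s / S) ^ 2 - 2 * (a ^ 2 / (L * S)) * ι := by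
    have h1 : ‖g x‖ = a / L * r := by
      rw [hgdef]
      simp only [norm_smul, Real.norm_eq_abs, ← hrdef, ← hLdef]
      rw [abs_of_pos (div_pos ha hL)]
    have h2 : ‖g y‖ = a / S * s := by
      rw [hgdef]
      simp only [norm_smul, Real.norm_eq_abs, ← hsdef, ← hSdef]
      rw [abs_of_pos (div_pos ha hS)]
    have h3 : ⟪g x, g y⟫ = a / L * (a / S * ι) := by
      rw [hgdef]
      simp only [real_inner_smul_left, real_inner_smul_right, ← hrdef, ← hsdef, ← hLdef,
        ← hSdef, ← hιdef]
      ring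
    rw [norm_sub_sq_real, h1, h2, h3]
    field_simp
    ring
  have hxy2 : ‖x - y‖ ^ 2 = r ^ 2 + s ^ 2 - 2 * ι := by
    rw [norm_sub_sq_real, ← hrdef, ← hsdef, ← hιdef]
    ring
  have hklow := lamAux_key_lower a b r s ι L S T ha hb hr hs hι hL2 hS2 hT2 hL hS hT
  have hkup := lamAux_key_upper a b r s ι L S ha hb hr hs hι hL2 hS2 hL hS
  rw [← hxy2, ← hgnorm2] at hklow hkup
  have h5 : a * b / T ^ 3 * ‖x - y‖ ≤ ‖g x - g y‖ := by
    exact (pow_le_pow_iff_left₀ (by positivity) (norm_nonneg (g x - g y)) two_ne_zero).mp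
      (by rw [mul_pow]; exact hklow)
  constructor
  · -- lower bound
    rw [hDnorm]
    have hM : 0 ≤ max r s := le_trans hr (le_max_left r s)
    have hT1 : T ≤ (a + b + 1) * (1 + max r s) := by
      apply (pow_le_pow_iff_left₀ hT.le (by positivity) two_ne_zero).mp
      rw [hT2]
      have e0 : a * (max r s) ^ 2 + b ≤ (a + b) * (1 + (max r s) ^ 2) := by
        nlinarith [sq_nonneg (max r s)]
      have e1a : a + b ≤ (a + b + 1) ^ 2 := by nlinarith [sq_nonneg (a + b)]
      have e1b : 1 + (max r s) ^ 2 ≤ (1 + max r s) ^ 2 := by nlinarith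
      calc a * (max r s) ^ 2 + b ≤ (a + b) * (1 + (max r s) ^ 2) := e0
        _ ≤ (a + b + 1) ^ 2 * (1 + max r s) ^ 2 :=
            mul_le_mul e1a e1b (by positivity) (by positivity)
        _ = ((a + b + 1) * (1 + max r s)) ^ 2 := by ring
    have hT3 : T ^ 3 ≤ (a + b + 1) ^ 3 * (1 + max r s) ^ 3 := by
      calc T ^ 3 ≤ ((a + b + 1) * (1 + max r s)) ^ 3 := pow_le_pow_left₀ hT.le hT1 3
        _ = _ := by ring
    have hM3 : (1 + max r s) ^ 3 ≤ 4 * (1 + r ^ 3 + s ^ 3) := by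
      have hMr : (max r s) ^ 3 ≤ r ^ 3 + s ^ 3 := by
        rcases max_choice r s with h | h <;> rw [h]
        · nlinarith [pow_nonneg hs 3]
        · nlinarith [pow_nonneg hr 3]
      nlinarith [mul_nonneg (sq_nonneg (1 - max r s)) hM]
    have hpos3 : (0:ℝ) < 1 + r ^ 3 + s ^ 3 := by positivity
    rw [div_le_iff₀ hpos3]
    have h6 : ‖x - y‖ * (a * b) ≤ T ^ 3 * ‖g x - g y‖ := by
      have h6a := mul_le_mul_of_nonneg_left h5 (le_of_lt (pow_pos hT 3))
      calc ‖x - y‖ * (a * b) = T ^ 3 * (a * b / T ^ 3 * ‖x - y‖) := by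
            field_simp
        _ ≤ T ^ 3 * ‖g x - g y‖ := h6a
    have h7 : T ^ 3 ≤ 4 * (a + b + 1) ^ 3 * (1 + r ^ 3 + s ^ 3) := by
      calc T ^ 3 ≤ (a + b + 1) ^ 3 * (1 + max r s) ^ 3 := hT3
        _ ≤ (a + b + 1) ^ 3 * (4 * (1 + r ^ 3 + s ^ 3)) :=
            mul_le_mul_of_nonneg_left hM3 (by positivity)
        _ = _ := by ring
    have hab : 0 < a * b := mul_pos ha hb
    have h8 : ‖x - y‖ * (a * b) ≤ (4 * (a + b + 1) ^ 3 * (1 + r ^ 3 + s ^ 3)) * ‖g x - g y‖ := by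
      calc ‖x - y‖ * (a * b) ≤ T ^ 3 * ‖g x - g y‖ := h6
        _ ≤ _ := mul_le_mul_of_nonneg_right h7 (norm_nonneg _)
    have hCup0 : 0 ≤ Cup := by positivity
    have h9 : ‖x - y‖ ≤ Clow * (1 + r ^ 3 + s ^ 3) * ‖g x - g y‖ := by
      rw [hClow, div_mul_eq_mul_div, div_mul_eq_mul_div, le_div_iff₀ hab]
      linarith [h8]
    calc ‖x - y‖ ≤ Clow * (1 + r ^ 3 + s ^ 3) * ‖g x - g y‖ := h9
      _ ≤ (Clow + Cup) * ‖g x - g y‖ * (1 + r ^ 3 + s ^ 3) := by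
          linarith [mul_nonneg (mul_nonneg hCup0 hpos3.le) (norm_nonneg (g x - g y))]
  · -- upper bound
    rw [hDnorm]
    have hCup0 : 0 ≤ Cup := by positivity
    have hClow0 : 0 ≤ Clow := by positivity
    have hup2 : ‖g x - g y‖ ^ 2 ≤ (Cup * ‖x - y‖) ^ 2 := by
      have hc : a ^ 2 / b ≤ Cup ^ 2 := by
        rw [hCup]
        have h1 : (a / b + a) ^ 2 = a ^ 2 / b ^ 2 + 2 * (a ^ 2 / b) + a ^ 2 := by
          field_simp
          ring
        have h2 : 0 ≤ a ^ 2 / b ^ 2 := by positivity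
        have h3 : 0 ≤ a ^ 2 / b := by positivity
        have h4 : 0 ≤ a ^ 2 := by positivity
        linarith
      calc ‖g x - g y‖ ^ 2 ≤ a ^ 2 / b * ‖x - y‖ ^ 2 := hkup
        _ ≤ Cup ^ 2 * ‖x - y‖ ^ 2 := mul_le_mul_of_nonneg_right hc (sq_nonneg _)
        _ = (Cup * ‖x - y‖) ^ 2 := by ring
    have h10 := (pow_le_pow_iff_left₀ (norm_nonneg (g x - g y))
      (mul_nonneg hCup0 (norm_nonneg (x - y))) two_ne_zero).mp hup2
    linarith [h10, mul_nonneg hClow0 (norm_nonneg (x - y))]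

end
end

section
/- Let a, b ∈ (0,∞), Λ(x) = √(a|x|² + b) on ℝ², and for (μ,ν) ∈ {(+,+),(+,−),(−,−)} define the phase Φ_{μν}(ξ,η) = Λ(ξ) − μΛ(ξ−η) − νΛ(η). Then for all ξ, η ∈ ℝ², |∇_{ξ,η} Φ_{μν}(ξ,η)| ≲ |Φ_{μν}(ξ,η)|, with an implicit constant depending only on a and b. -/
noncomputable section

open MeasureTheory Complex Filter
open scoped ENNReal FourierTransform RealInnerProductSpace

set_option maxHeartbeats 1000000

section PhaseGradAux

variable {a b : ℝ}

lemma sq_le_helper {x y : ℝ} (hy : 0 ≤ y) (h : x ^ 2 ≤ y ^ 2) : x ≤ y := by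
  nlinarith [sq_nonneg (x - y), sq_nonneg (x + y)]

lemma lam_sq (ha : 0 < a) (hb : 0 < b) (x : Plane) :
    lamSym a b x ^ 2 = a * ‖x‖ ^ 2 + b := by
  have : 0 ≤ a * ‖x‖ ^ 2 + b := by positivity
  exact Real.sq_sqrt this

lemma lam_pos (ha : 0 < a) (hb : 0 < b) (x : Plane) : 0 < lamSym a b x := by
  apply Real.sqrt_pos.2; positivity

lemma lam_neg (x : Plane) : lamSym a b (-x) = lamSym a b x := by
  simp [lamSym]

lemma sqrt_b_le (ha : 0 < a) (hb : 0 < b) (x : Plane) :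
    Real.sqrt b ≤ lamSym a b x := by
  apply Real.sqrt_le_sqrt; nlinarith [sq_nonneg ‖x‖]

noncomputable def phaseG (a b : ℝ) (x : Plane) : Plane := (a / lamSym a b x) • x

lemma gnorm_le (ha : 0 < a) (hb : 0 < b) (x : Plane) :
    ‖phaseG a b x‖ ≤ Real.sqrt a := by
  have hL := lam_pos ha hb x
  have hsq := lam_sq ha hb x
  apply sq_le_helper (Real.sqrt_nonneg a)
  rw [Real.sq_sqrt ha.le]
  have : ‖phaseG a b x‖ ^ 2 = (a / lamSym a b x) ^ 2 * ‖x‖ ^ 2 := by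
    rw [phaseG, norm_smul]; rw [mul_pow]
    congr 1
    rw [Real.norm_eq_abs, _root_.sq_abs]
  rw [this, div_pow, div_mul_eq_mul_div, div_le_iff₀ (by positivity)]
  nlinarith [sq_nonneg ‖x‖]

lemma lam_mul_ge (ha : 0 < a) (hb : 0 < b) (x y : Plane) :
    a * (‖x‖ * ‖y‖) ≤ lamSym a b x * lamSym a b y := by
  have h1 := lam_sq ha hb x
  have h2 := lam_sq ha hb y
  have hx := lam_pos ha hb x
  have hy := lam_pos ha hb y
  apply sq_le_helper (by positivity)
  have hn1 := sq_nonneg ‖x‖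
  have hn2 := sq_nonneg ‖y‖
  have e : (lamSym a b x * lamSym a b y) ^ 2 = (a * ‖x‖ ^ 2 + b) * (a * ‖y‖ ^ 2 + b) := by
    rw [mul_pow, h1, h2]
  nlinarith [e, mul_nonneg hn1 hn2, mul_nonneg (mul_nonneg ha.le hb.le) hn1,
    mul_nonneg (mul_nonneg ha.le hb.le) hn2, mul_pos hb hb]

lemma lam_triangle (ha : 0 < a) (hb : 0 < b) (x y : Plane) :
    lamSym a b (x + y) ≤ lamSym a b x + lamSym a b y := by
  have h1 := lam_sq ha hb x
  have h2 := lam_sq ha hb y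
  have h3 := lam_sq ha hb (x + y)
  have hx := lam_pos ha hb x
  have hy := lam_pos ha hb y
  have hip : a * ⟪x, y⟫ ≤ lamSym a b x * lamSym a b y := by
    calc a * ⟪x, y⟫ ≤ a * (‖x‖ * ‖y‖) := by
          have := real_inner_le_norm x y
          nlinarith
      _ ≤ _ := lam_mul_ge ha hb x y
  apply sq_le_helper (by positivity)
  have hadd : ‖x + y‖ ^ 2 = ‖x‖ ^ 2 + 2 * ⟪x, y⟫ + ‖y‖ ^ 2 := norm_add_sq_real x y
  nlinarith


lemma key2_aux {a b s t A B : ℝ} (ha : 0 < a) (hb : 0 < b) (ht : 0 ≤ t) (hts : t ≤ s)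
    (hA2 : A ^ 2 = a * s ^ 2 + b) (hB2 : B ^ 2 = a * t ^ 2 + b) (hA : 0 < A) (hB : 0 < B) :
    a * ((s * B - t * A) ^ 2 * (A + B) ^ 2) ≤ 16 * b * (A ^ 2 + B ^ 2) ^ 2 := by
  have hs : 0 ≤ s := ht.trans hts
  have ht2s2 : t ^ 2 ≤ s ^ 2 := by nlinarith
  have hBA : B ≤ A := sq_le_helper hA.le (by nlinarith)
  have e1 : s ^ 2 * B ^ 2 - t ^ 2 * A ^ 2 = b * (s ^ 2 - t ^ 2) := by
    linear_combination s ^ 2 * hB2 - t ^ 2 * hA2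
  have hid : (s * B - t * A) ^ 2 * (s * B + t * A) ^ 2 = b ^ 2 * (s ^ 2 - t ^ 2) ^ 2 := by
    linear_combination (s ^ 2 * B ^ 2 - t ^ 2 * A ^ 2 + b * (s ^ 2 - t ^ 2)) * e1
  have h31 : s ^ 2 * B ^ 2 ≤ (s * B + t * A) ^ 2 := by
    nlinarith [mul_nonneg (mul_nonneg (mul_nonneg hs ht) hA.le) hB.le, sq_nonneg (t * A)]
  have h32 : (s * B - t * A) ^ 2 * (s ^ 2 * B ^ 2) ≤ (s * B - t * A) ^ 2 * (s * B + t * A) ^ 2 :=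
    mul_le_mul_of_nonneg_left h31 (sq_nonneg _)
  have h33 : b ^ 2 * (s ^ 2 - t ^ 2) ^ 2 ≤ b ^ 2 * s ^ 4 := by
    nlinarith [mul_nonneg (sq_nonneg b) (mul_nonneg (sq_nonneg t) (sub_nonneg.2 ht2s2)),
      mul_nonneg (sq_nonneg b) (mul_nonneg (sq_nonneg t) (sq_nonneg s))]
  have h3 : (s * B - t * A) ^ 2 * (s ^ 2 * B ^ 2) ≤ b ^ 2 * s ^ 4 := by linarith
  rcases eq_or_lt_of_le hs with hs0 | hspos
  · have ht0 : t = 0 := le_antisymm (hts.trans hs0.symm.le) ht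
    have hs0' : s = 0 := hs0.symm
    rw [hs0', ht0]
    have h0 : (0:ℝ) * B - 0 * A = 0 := by ring
    rw [h0]
    have : a * ((0:ℝ) ^ 2 * (A + B) ^ 2) = 0 := by ring
    rw [this]
    positivity
  · have hc : (0:ℝ) < s ^ 2 * B ^ 2 := by positivity
    have hAB4 : (A + B) ^ 2 ≤ 4 * A ^ 2 := by nlinarith
    have hasA : a * s ^ 2 ≤ A ^ 2 := by nlinarith
    have hbB : b ≤ B ^ 2 := by nlinarith
    have h4 : A ^ 4 ≤ (A ^ 2 + B ^ 2) ^ 2 := by nlinarith [sq_nonneg B, sq_nonneg A]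
    have h5 : b * A ^ 4 ≤ B ^ 2 * (A ^ 2 + B ^ 2) ^ 2 :=
      mul_le_mul hbB h4 (by positivity) (sq_nonneg B)
    have H : a * ((s * B - t * A) ^ 2 * (A + B) ^ 2) * (s ^ 2 * B ^ 2) ≤
        16 * b * (A ^ 2 + B ^ 2) ^ 2 * (s ^ 2 * B ^ 2) := by
      calc a * ((s * B - t * A) ^ 2 * (A + B) ^ 2) * (s ^ 2 * B ^ 2)
          = (a * (A + B) ^ 2) * ((s * B - t * A) ^ 2 * (s ^ 2 * B ^ 2)) := by ring
        _ ≤ (a * (A + B) ^ 2) * (b ^ 2 * s ^ 4) :=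
            mul_le_mul_of_nonneg_left h3 (by positivity)
        _ ≤ (a * (4 * A ^ 2)) * (b ^ 2 * s ^ 4) := by
            have : a * (A + B) ^ 2 ≤ a * (4 * A ^ 2) := mul_le_mul_of_nonneg_left hAB4 ha.le
            exact mul_le_mul_of_nonneg_right this (by positivity)
        _ = 4 * b ^ 2 * (a * s ^ 2) * (s ^ 2 * A ^ 2) := by ring
        _ ≤ 4 * b ^ 2 * A ^ 2 * (s ^ 2 * A ^ 2) := by
            have h6 : 4 * b ^ 2 * (a * s ^ 2) ≤ 4 * b ^ 2 * A ^ 2 :=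
              mul_le_mul_of_nonneg_left hasA (by positivity)
            exact mul_le_mul_of_nonneg_right h6 (by positivity)
        _ = 4 * s ^ 2 * (b * A ^ 4) * b := by ring
        _ ≤ 4 * s ^ 2 * (B ^ 2 * (A ^ 2 + B ^ 2) ^ 2) * b := by
            have := mul_le_mul_of_nonneg_left h5 (show (0:ℝ) ≤ 4 * s ^ 2 by positivity)
            exact mul_le_mul_of_nonneg_right this hb.le
        _ ≤ 16 * b * (A ^ 2 + B ^ 2) ^ 2 * (s ^ 2 * B ^ 2) := by
            have h0 : 0 ≤ b * s ^ 2 * B ^ 2 * (A ^ 2 + B ^ 2) ^ 2 := by positivity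
            linarith [h0]

    exact le_of_mul_le_mul_right H hc

lemma lemC (ha : 0 < a) (hb : 0 < b) (u v : Plane) :
    ‖phaseG a b u - phaseG a b v‖ * (lamSym a b u + lamSym a b v) ≤
      Real.sqrt (272 * a / b) * (lamSym a b u * lamSym a b v - a * ⟪u, v⟫ + b) := by
  set A := lamSym a b u with hAdef
  set B := lamSym a b v with hBdef
  set s := ‖u‖ with hsdef
  set t := ‖v‖ with htdef
  set p := (⟪u, v⟫ : ℝ) with hpdef
  have hA2 : A ^ 2 = a * s ^ 2 + b := lam_sq ha hb u
  have hB2 : B ^ 2 = a * t ^ 2 + b := lam_sq ha hb v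
  have hA : 0 < A := lam_pos ha hb u
  have hB : 0 < B := lam_pos ha hb v
  have hs : 0 ≤ s := norm_nonneg u
  have ht : 0 ≤ t := norm_nonneg v
  have hpst : p ≤ s * t := real_inner_le_norm u v
  have hpst' : -(s * t) ≤ p := by
    have := abs_real_inner_le_norm u v
    have := abs_le.1 this
    linarith [this.1]
  have hD : a * (s * t) ≤ A * B := lam_mul_ge ha hb u v
  set R := A * B - a * p + b with hRdef
  have hapst : a * p ≤ a * (s * t) := mul_le_mul_of_nonneg_left hpst ha.le
  have hbR : b ≤ R := by simp only [hRdef]; linarith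
  have hRpos : 0 < R := lt_of_lt_of_le hb hbR
  have hbAB : b ≤ A * B := by
    apply sq_le_helper (by positivity)
    have e : (A * B) ^ 2 = (a * s ^ 2 + b) * (a * t ^ 2 + b) := by rw [mul_pow, hA2, hB2]
    nlinarith [mul_nonneg (mul_nonneg ha.le (sq_nonneg s)) (mul_nonneg ha.le (sq_nonneg t)),
      mul_nonneg (mul_nonneg ha.le (sq_nonneg s)) hb.le,
      mul_nonneg (mul_nonneg ha.le (sq_nonneg t)) hb.le]
  have key1 : b * (A ^ 2 + B ^ 2) ≤ 4 * (A * B) * R := by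
    have e : (A * B) ^ 2 = (a * s ^ 2 + b) * (a * t ^ 2 + b) := by rw [mul_pow, hA2, hB2]
    have h3ab : 0 ≤ 3 * (A * B) - a * (s * t) := by nlinarith [mul_pos hA hB]
    have hP1 : 0 ≤ (A * B - a * (s * t)) * (3 * (A * B) - a * (s * t)) :=
      mul_nonneg (by linarith) h3ab
    have hP2 : 0 ≤ (A * B) * (a * (s * t) - a * p) :=
      mul_nonneg (mul_pos hA hB).le (by linarith)
    have hP3 : 0 ≤ b * (A * B - b) := mul_nonneg hb.le (by linarith)
    simp only [hRdef]
    nlinarith [hP1, hP2, hP3, e]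
  have key2 : a * ((s * B - t * A) ^ 2 * (A + B) ^ 2) ≤ 16 * b * (A ^ 2 + B ^ 2) ^ 2 := by
    rcases le_total t s with hts | hts
    · exact key2_aux ha hb ht hts hA2 hB2 hA hB
    · have := key2_aux ha hb hs hts hB2 hA2 hB hA
      calc a * ((s * B - t * A) ^ 2 * (A + B) ^ 2)
          = a * ((t * A - s * B) ^ 2 * (B + A) ^ 2) := by ring
        _ ≤ 16 * b * (B ^ 2 + A ^ 2) ^ 2 := this
        _ = 16 * b * (A ^ 2 + B ^ 2) ^ 2 := by ring
  -- expansion of the norm of the difference of gradients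
  have hgu : ‖phaseG a b u - phaseG a b v‖ ^ 2
      = (a / A) ^ 2 * s ^ 2 - 2 * ((a / A) * (a / B) * p) + (a / B) ^ 2 * t ^ 2 := by
    rw [phaseG, phaseG, ← hAdef, ← hBdef, norm_sub_sq_real]
    rw [norm_smul, norm_smul, real_inner_smul_left, real_inner_smul_right]
    rw [Real.norm_eq_abs, Real.norm_eq_abs, mul_pow, mul_pow, _root_.sq_abs, _root_.sq_abs]
    rw [← hsdef, ← htdef, ← hpdef]
    ring
  have hg3 : ‖phaseG a b u - phaseG a b v‖ ^ 2 * (A ^ 2 * B ^ 2)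
      = a ^ 2 * (s ^ 2 * B ^ 2 + t ^ 2 * A ^ 2 - 2 * p * (A * B)) := by
    rw [hgu]
    field_simp
    ring
  -- main polynomial bound
  have hLb : a ^ 2 * (s ^ 2 * B ^ 2 + t ^ 2 * A ^ 2 - 2 * p * (A * B)) * (A + B) ^ 2 * b
      ≤ 272 * a * R ^ 2 * (A ^ 2 * B ^ 2) := by
    have k1sq : (b * (A ^ 2 + B ^ 2)) ^ 2 ≤ (4 * (A * B) * R) ^ 2 :=
      pow_le_pow_left₀ (by positivity) key1 2
    have P1b : a * b * (a * ((s * B - t * A) ^ 2 * (A + B) ^ 2))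
        ≤ 256 * a * R ^ 2 * (A ^ 2 * B ^ 2) := by
      calc a * b * (a * ((s * B - t * A) ^ 2 * (A + B) ^ 2))
          ≤ a * b * (16 * b * (A ^ 2 + B ^ 2) ^ 2) :=
            mul_le_mul_of_nonneg_left key2 (by positivity)
        _ = 16 * a * (b * (A ^ 2 + B ^ 2)) ^ 2 := by ring
        _ ≤ 16 * a * (4 * (A * B) * R) ^ 2 :=
            mul_le_mul_of_nonneg_left k1sq (by positivity)
        _ = 256 * a * R ^ 2 * (A ^ 2 * B ^ 2) := by ring
    have step1 : (A + B) ^ 2 ≤ 2 * (A ^ 2 + B ^ 2) := by nlinarith [sq_nonneg (A - B)]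
    have haR2 : a * (s * t - p) ≤ R := by simp only [hRdef]; nlinarith
    have hmm : (a * (s * t - p)) * (b * (A ^ 2 + B ^ 2)) ≤ R * (4 * (A * B) * R) :=
      mul_le_mul haR2 key1 (by positivity) hRpos.le
    have P2b : 2 * a ^ 2 * (s * t - p) * (A * B) * (A + B) ^ 2 * b
        ≤ 16 * a * R ^ 2 * (A ^ 2 * B ^ 2) := by
      have c1 : 2 * a ^ 2 * (s * t - p) * (A * B) * (A + B) ^ 2 * b
          ≤ 2 * a ^ 2 * (s * t - p) * (A * B) * (2 * (A ^ 2 + B ^ 2)) * b := by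
        have hnn : 0 ≤ 2 * a ^ 2 * (s * t - p) * (A * B) * b := by
          have : 0 ≤ s * t - p := by linarith
          positivity
        nlinarith [mul_nonneg hnn (sub_nonneg.2 step1)]
      have c2 : 2 * a ^ 2 * (s * t - p) * (A * B) * (2 * (A ^ 2 + B ^ 2)) * b
          = 4 * a * (A * B) * ((a * (s * t - p)) * (b * (A ^ 2 + B ^ 2))) := by ring
      have c3 : 4 * a * (A * B) * ((a * (s * t - p)) * (b * (A ^ 2 + B ^ 2)))
          ≤ 4 * a * (A * B) * (R * (4 * (A * B) * R)) :=
        mul_le_mul_of_nonneg_left hmm (by positivity)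
      have c4 : 4 * a * (A * B) * (R * (4 * (A * B) * R)) = 16 * a * R ^ 2 * (A ^ 2 * B ^ 2) := by
        ring
      linarith [c1, c2 ▸ c3, c4 ▸ c3]
    have hsplit : a ^ 2 * (s ^ 2 * B ^ 2 + t ^ 2 * A ^ 2 - 2 * p * (A * B)) * (A + B) ^ 2 * b
        = a * b * (a * ((s * B - t * A) ^ 2 * (A + B) ^ 2))
          + 2 * a ^ 2 * (s * t - p) * (A * B) * (A + B) ^ 2 * b := by ring
    linarith [hsplit ▸ (add_le_add P1b P2b)]
  -- conclude
  apply sq_le_helper (by positivity)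
  rw [mul_pow, mul_pow, Real.sq_sqrt (by positivity : (0:ℝ) ≤ 272 * a / b)]
  have hfin : ‖phaseG a b u - phaseG a b v‖ ^ 2 * (A + B) ^ 2 * (b * (A ^ 2 * B ^ 2))
      ≤ 272 * a * R ^ 2 * (A ^ 2 * B ^ 2) := by
    calc ‖phaseG a b u - phaseG a b v‖ ^ 2 * (A + B) ^ 2 * (b * (A ^ 2 * B ^ 2))
        = (‖phaseG a b u - phaseG a b v‖ ^ 2 * (A ^ 2 * B ^ 2)) * ((A + B) ^ 2 * b) := by ring
      _ = a ^ 2 * (s ^ 2 * B ^ 2 + t ^ 2 * A ^ 2 - 2 * p * (A * B)) * ((A + B) ^ 2 * b) := by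
          rw [hg3]
      _ = a ^ 2 * (s ^ 2 * B ^ 2 + t ^ 2 * A ^ 2 - 2 * p * (A * B)) * (A + B) ^ 2 * b := by ring
      _ ≤ 272 * a * R ^ 2 * (A ^ 2 * B ^ 2) := hLb
  have hABpos : (0:ℝ) < A ^ 2 * B ^ 2 := by positivity
  have hRsq : (A * B - a * p + b) ^ 2 = R ^ 2 := by rw [hRdef]
  rw [hRsq]
  rw [div_mul_eq_mul_div, le_div_iff₀ hb]
  exact le_of_mul_le_mul_right (by linarith [hfin] :
    (‖phaseG a b u - phaseG a b v‖ ^ 2 * (A + B) ^ 2 * b) * (A ^ 2 * B ^ 2)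
      ≤ (272 * a * R ^ 2) * (A ^ 2 * B ^ 2)) hABpos

lemma phaseG_neg (x : Plane) : phaseG a b (-x) = -(phaseG a b x) := by
  simp [phaseG, lam_neg]

lemma inner_lam_le (ha : 0 < a) (hb : 0 < b) (x y : Plane) :
    a * ⟪x, y⟫ ≤ lamSym a b x * lamSym a b y := by
  calc a * ⟪x, y⟫ ≤ a * (‖x‖ * ‖y‖) := by
        have := real_inner_le_norm x y
        nlinarith
    _ ≤ _ := lam_mul_ge ha hb x y

lemma mainbound (ha : 0 < a) (hb : 0 < b) (u v : Plane) :
    ‖phaseG a b (u + v) - phaseG a b u‖ + ‖phaseG a b u - phaseG a b v‖ ≤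
      6 * Real.sqrt (272 * a / b) *
        (lamSym a b u + lamSym a b v - lamSym a b (u + v)) := by
  set C0 := Real.sqrt (272 * a / b) with hC0def
  have hC0 : 0 ≤ C0 := Real.sqrt_nonneg _
  set Au := lamSym a b u
  set Av := lamSym a b v
  set Ax := lamSym a b (u + v)
  have hAu : 0 < Au := lam_pos ha hb u
  have hAv : 0 < Av := lam_pos ha hb v
  have hAx : 0 < Ax := lam_pos ha hb (u + v)
  have htri : Ax ≤ Au + Av := lam_triangle ha hb u v
  have htri2 : Av ≤ Ax + Au := by
    have he : v = (u + v) + (-u) := by abel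
    calc Av = lamSym a b ((u + v) + (-u)) := by rw [← he]
      _ ≤ Ax + lamSym a b (-u) := lam_triangle ha hb (u + v) (-u)
      _ = Ax + Au := by rw [lam_neg]
  set p := (⟪u, v⟫ : ℝ)
  set N := b + 2 * (Au * Av) - 2 * (a * p) with hNdef
  have hip : a * p ≤ Au * Av := inner_lam_le ha hb u v
  have hNM : (Au + Av - Ax) * (Ax + Au + Av) = N := by
    have hu := lam_sq ha hb u
    have hv := lam_sq ha hb v
    have hx := lam_sq ha hb (u + v)
    rw [norm_add_sq_real] at hx
    simp only [hNdef]
    linear_combination hu + hv - hx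
  have hgap : 0 ≤ Au + Av - Ax := by linarith
  have hM : 0 < Ax + Au + Av := by linarith
  have hNnn : 0 ≤ N := by
    have := hNM ▸ mul_nonneg hgap hM.le
    linarith [this]
  -- second term
  have t2 : ‖phaseG a b u - phaseG a b v‖ * (Ax + Au + Av) ≤ 2 * C0 * N := by
    have hc := lemC ha hb u v
    have hR2 : Au * Av - a * p + b ≤ N := by simp only [hNdef]; linarith
    have h1 : ‖phaseG a b u - phaseG a b v‖ * (Ax + Au + Av)
        ≤ 2 * (‖phaseG a b u - phaseG a b v‖ * (Au + Av)) := by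
      nlinarith [norm_nonneg (phaseG a b u - phaseG a b v), htri]
    have h2 : C0 * (Au * Av - a * p + b) ≤ C0 * N := mul_le_mul_of_nonneg_left hR2 hC0
    linarith
  -- first term
  have t1 : ‖phaseG a b (u + v) - phaseG a b u‖ * (Ax + Au + Av) ≤ 4 * C0 * N := by
    have hc := lemC ha hb (u + v) u
    have hinner : (⟪u + v, u⟫ : ℝ) = ‖u‖ ^ 2 + p := by
      rw [inner_add_left, real_inner_self_eq_norm_sq, real_inner_comm]
    rw [hinner] at hc
    have hu := lam_sq ha hb u
    have hAxAu : Ax * Au ≤ (Au + Av) * Au := mul_le_mul_of_nonneg_right htri hAu.le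
    have hR1 : Ax * Au - a * (‖u‖ ^ 2 + p) + b ≤ 2 * N := by
      simp only [hNdef]; nlinarith
    have h1 : ‖phaseG a b (u + v) - phaseG a b u‖ * (Ax + Au + Av)
        ≤ 2 * (‖phaseG a b (u + v) - phaseG a b u‖ * (Ax + Au)) := by
      nlinarith [norm_nonneg (phaseG a b (u + v) - phaseG a b u), htri2]
    have h2 : C0 * (Ax * Au - a * (‖u‖ ^ 2 + p) + b) ≤ C0 * (2 * N) :=
      mul_le_mul_of_nonneg_left hR1 hC0
    linarith
  have hsum : (‖phaseG a b (u + v) - phaseG a b u‖ + ‖phaseG a b u - phaseG a b v‖)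
      * (Ax + Au + Av) ≤ (6 * C0 * (Au + Av - Ax)) * (Ax + Au + Av) := by
    have : (6 * C0 * (Au + Av - Ax)) * (Ax + Au + Av) = 6 * C0 * N := by
      rw [mul_assoc (6 * C0), hNM]
    rw [this]
    nlinarith [t1, t2]
  exact le_of_mul_le_mul_right hsum hM

lemma hasFDerivAt_lamSym (ha : 0 < a) (hb : 0 < b) (x : Plane) :
    HasFDerivAt (lamSym a b) ((a / lamSym a b x) • (innerSL ℝ x)) x := by
  have h0 : HasFDerivAt (fun y : Plane => ‖y‖ ^ 2) (2 • (innerSL ℝ x)) x := by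
    simpa using (hasFDerivAt_id (𝕜 := ℝ) x).norm_sq
  have h1 : HasFDerivAt (fun y : Plane => a * ‖y‖ ^ 2 + b) (a • (2 • (innerSL ℝ x))) x :=
    (h0.const_mul a).add_const b
  have hne : a * ‖x‖ ^ 2 + b ≠ 0 := by positivity
  have h2 := h1.sqrt hne
  have heq : (1 / (2 * Real.sqrt (a * ‖x‖ ^ 2 + b))) • (a • (2 • (innerSL ℝ x)))
      = (a / lamSym a b x) • (innerSL ℝ x) := by
    ext w
    simp only [ContinuousLinearMap.smul_apply, innerSL_apply_apply, smul_eq_mul,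
      ContinuousLinearMap.coe_smul', Pi.smul_apply]
    have hL : lamSym a b x = Real.sqrt (a * ‖x‖ ^ 2 + b) := rfl
    have hLpos : 0 < Real.sqrt (a * ‖x‖ ^ 2 + b) := Real.sqrt_pos.2 (by positivity)
    rw [hL]
    field_simp
    ring
  rw [heq] at h2
  exact h2

def phaseD (v₁ v₂ : Plane) : (Plane × Plane) →L[ℝ] ℝ :=
  (innerSL ℝ v₁).comp (ContinuousLinearMap.fst ℝ Plane Plane) +
    (innerSL ℝ v₂).comp (ContinuousLinearMap.snd ℝ Plane Plane)

lemma phaseD_norm_le (v₁ v₂ : Plane) : ‖phaseD v₁ v₂‖ ≤ ‖v₁‖ + ‖v₂‖ := by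
  apply ContinuousLinearMap.opNorm_le_bound _ (by positivity)
  intro w
  have : phaseD v₁ v₂ w = ⟪v₁, w.1⟫ + ⟪v₂, w.2⟫ := by
    simp [phaseD]
  rw [this]
  calc ‖(⟪v₁, w.1⟫ + ⟪v₂, w.2⟫ : ℝ)‖ ≤ ‖(⟪v₁, w.1⟫ : ℝ)‖ + ‖(⟪v₂, w.2⟫ : ℝ)‖ := norm_add_le _ _
    _ ≤ ‖v₁‖ * ‖w.1‖ + ‖v₂‖ * ‖w.2‖ := by
        gcongr
        · exact norm_inner_le_norm v₁ w.1
        · exact norm_inner_le_norm v₂ w.2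
    _ ≤ ‖v₁‖ * ‖w‖ + ‖v₂‖ * ‖w‖ := by
        gcongr
        · exact norm_fst_le w
        · exact norm_snd_le w
    _ = (‖v₁‖ + ‖v₂‖) * ‖w‖ := by ring

lemma hasFDerivAt_phase (ha : 0 < a) (hb : 0 < b) (μ ν : ℝ) (ξ η : Plane) :
    HasFDerivAt
      (fun p : Plane × Plane =>
        lamSym a b p.1 - μ * lamSym a b (p.1 - p.2) - ν * lamSym a b p.2)
      (phaseD (phaseG a b ξ - μ • phaseG a b (ξ - η))
        (μ • phaseG a b (ξ - η) - ν • phaseG a b η)) (ξ, η) := by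
  have h1 : HasFDerivAt (fun p : Plane × Plane => lamSym a b p.1)
      (((a / lamSym a b ξ) • (innerSL ℝ ξ)).comp (ContinuousLinearMap.fst ℝ Plane Plane))
      (ξ, η) :=
    by have := (hasFDerivAt_lamSym ha hb ξ).comp (ξ, η) (hasFDerivAt_fst (𝕜 := ℝ) (p := (ξ, η))); exact this
  have h2 : HasFDerivAt (fun p : Plane × Plane => lamSym a b (p.1 - p.2))
      (((a / lamSym a b (ξ - η)) • (innerSL ℝ (ξ - η))).comp
        ((ContinuousLinearMap.fst ℝ Plane Plane) - (ContinuousLinearMap.snd ℝ Plane Plane)))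
      (ξ, η) :=
    by have := (hasFDerivAt_lamSym ha hb (ξ - η)).comp (ξ, η) ((hasFDerivAt_fst (𝕜 := ℝ) (p := (ξ, η))).sub (hasFDerivAt_snd (𝕜 := ℝ) (p := (ξ, η)))); exact this
  have h3 : HasFDerivAt (fun p : Plane × Plane => lamSym a b p.2)
      (((a / lamSym a b η) • (innerSL ℝ η)).comp (ContinuousLinearMap.snd ℝ Plane Plane))
      (ξ, η) :=
    by have := (hasFDerivAt_lamSym ha hb η).comp (ξ, η) (hasFDerivAt_snd (𝕜 := ℝ) (p := (ξ, η))); exact this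
  have H := (h1.sub (h2.const_mul μ)).sub (h3.const_mul ν)
  have heq : ((a / lamSym a b ξ) • (innerSL ℝ ξ)).comp (ContinuousLinearMap.fst ℝ Plane Plane)
      - μ • (((a / lamSym a b (ξ - η)) • (innerSL ℝ (ξ - η))).comp
        ((ContinuousLinearMap.fst ℝ Plane Plane) - (ContinuousLinearMap.snd ℝ Plane Plane)))
      - ν • (((a / lamSym a b η) • (innerSL ℝ η)).comp (ContinuousLinearMap.snd ℝ Plane Plane))
      = phaseD (phaseG a b ξ - μ • phaseG a b (ξ - η))
          (μ • phaseG a b (ξ - η) - ν • phaseG a b η) := by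
    refine ContinuousLinearMap.ext fun w => ?_
    simp only [phaseD, phaseG, ContinuousLinearMap.coe_sub', Pi.sub_apply,
      ContinuousLinearMap.coe_smul', Pi.smul_apply, ContinuousLinearMap.coe_comp',
      Function.comp_apply, ContinuousLinearMap.coe_fst', ContinuousLinearMap.coe_snd',
      ContinuousLinearMap.add_apply, innerSL_apply_apply, smul_eq_mul, inner_sub_left,
      inner_sub_right, real_inner_smul_left]
    ring
  rw [heq] at H
  exact H

end PhaseGradAux

/-- `|∇_{ξ,η}Φ_{μν}| ≲ |Φ_{μν}|` for the three phases. -/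
theorem phase_grad_bound (a b : ℝ) (ha : 0 < a) (hb : 0 < b) :
    ∃ C : ℝ, 0 < C ∧
      ∀ μ ν : ℝ, ((μ, ν) = ((1 : ℝ), (1 : ℝ)) ∨ (μ, ν) = ((1 : ℝ), (-1 : ℝ)) ∨
          (μ, ν) = ((-1 : ℝ), (-1 : ℝ))) →
        ∀ ξ η : Plane,
          ‖fderiv ℝ
              (fun p : Plane × Plane =>
                lamSym a b p.1 - μ * lamSym a b (p.1 - p.2) - ν * lamSym a b p.2)
              (ξ, η)‖ ≤
            C * |lamSym a b ξ - μ * lamSym a b (ξ - η) - ν * lamSym a b η| := by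
  have hC0 : 0 ≤ Real.sqrt (272 * a / b) := Real.sqrt_nonneg _
  have hsa : 0 < Real.sqrt a := Real.sqrt_pos.2 ha
  have hsb : 0 < Real.sqrt b := Real.sqrt_pos.2 hb
  have hq : 0 < 2 * Real.sqrt a / Real.sqrt b := div_pos (by linarith) hsb
  refine ⟨18 * Real.sqrt (272 * a / b) + 2 * Real.sqrt a / Real.sqrt b, by linarith, ?_⟩
  intro μ ν hμν ξ η
  rcases hμν with h | h | h <;> rw [Prod.mk.injEq] at h <;> obtain ⟨hμ, hν⟩ := h <;>
    subst hμ <;> subst hν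
  · -- (+,+)
    rw [(hasFDerivAt_phase ha hb 1 1 ξ η).fderiv]
    refine le_trans (phaseD_norm_le _ _) ?_
    simp only [one_smul, one_mul]
    have hm := mainbound ha hb (ξ - η) η
    rw [sub_add_cancel] at hm
    have htri := lam_triangle ha hb (ξ - η) η
    rw [sub_add_cancel] at htri
    have habs : |lamSym a b ξ - lamSym a b (ξ - η) - lamSym a b η|
        = lamSym a b (ξ - η) + lamSym a b η - lamSym a b ξ := by
      rw [_root_.abs_of_nonpos (by linarith)]; ring
    rw [habs]
    nlinarith [hm, mul_nonneg hC0 (by linarith :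
        0 ≤ lamSym a b (ξ - η) + lamSym a b η - lamSym a b ξ),
      mul_nonneg hq.le (by linarith :
        0 ≤ lamSym a b (ξ - η) + lamSym a b η - lamSym a b ξ)]
  · -- (+,-)
    rw [(hasFDerivAt_phase ha hb 1 (-1) ξ η).fderiv]
    refine le_trans (phaseD_norm_le _ _) ?_
    simp only [one_smul, neg_smul, sub_neg_eq_add, one_mul, neg_one_mul]
    have hm := mainbound ha hb ξ (-η)
    rw [lam_neg, phaseG_neg, ← sub_eq_add_neg, sub_neg_eq_add] at hm
    have htri := lam_triangle ha hb ξ (-η)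
    rw [lam_neg, ← sub_eq_add_neg] at htri
    have habs : |lamSym a b ξ - lamSym a b (ξ - η) + lamSym a b η|
        = lamSym a b ξ + lamSym a b η - lamSym a b (ξ - η) := by
      rw [_root_.abs_of_nonneg (by linarith)]; ring
    rw [habs]
    have e1 : ‖phaseG a b ξ - phaseG a b (ξ - η)‖ = ‖phaseG a b (ξ - η) - phaseG a b ξ‖ :=
      norm_sub_rev _ _
    have e2 : ‖phaseG a b (ξ - η) + phaseG a b η‖
        ≤ ‖phaseG a b (ξ - η) - phaseG a b ξ‖ + ‖phaseG a b ξ + phaseG a b η‖ := by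
      have e : phaseG a b (ξ - η) + phaseG a b η
          = (phaseG a b (ξ - η) - phaseG a b ξ) + (phaseG a b ξ + phaseG a b η) := by abel
      rw [e]; exact norm_add_le _ _
    have hgap : 0 ≤ lamSym a b ξ + lamSym a b η - lamSym a b (ξ - η) := by linarith
    have hA : ‖phaseG a b ξ - phaseG a b (ξ - η)‖ + ‖phaseG a b (ξ - η) + phaseG a b η‖
        ≤ 2 * (‖phaseG a b (ξ - η) - phaseG a b ξ‖ + ‖phaseG a b ξ + phaseG a b η‖) := by
      have := norm_nonneg (phaseG a b ξ + phaseG a b η)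
      have := norm_nonneg (phaseG a b (ξ - η) - phaseG a b ξ)
      linarith
    nlinarith [hm, hA, mul_nonneg hC0 hgap, mul_nonneg hq.le hgap]
  · -- (-,-)
    rw [(hasFDerivAt_phase ha hb (-1) (-1) ξ η).fderiv]
    refine le_trans (phaseD_norm_le _ _) ?_
    simp only [neg_smul, one_smul, sub_neg_eq_add, neg_one_mul]
    have g1 := gnorm_le ha hb ξ
    have g2 := gnorm_le ha hb (ξ - η)
    have g3 := gnorm_le ha hb η
    have n1 : ‖phaseG a b ξ + phaseG a b (ξ - η)‖ ≤ 2 * Real.sqrt a := by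
      calc ‖phaseG a b ξ + phaseG a b (ξ - η)‖ ≤ ‖phaseG a b ξ‖ + ‖phaseG a b (ξ - η)‖ :=
            norm_add_le _ _
        _ ≤ 2 * Real.sqrt a := by linarith
    have n2 : ‖-phaseG a b (ξ - η) + phaseG a b η‖ ≤ 2 * Real.sqrt a := by
      calc ‖-phaseG a b (ξ - η) + phaseG a b η‖ ≤ ‖-phaseG a b (ξ - η)‖ + ‖phaseG a b η‖ :=
            norm_add_le _ _
        _ = ‖phaseG a b (ξ - η)‖ + ‖phaseG a b η‖ := by rw [norm_neg]
        _ ≤ 2 * Real.sqrt a := by linarith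
    have l1 := sqrt_b_le ha hb ξ
    have l2 := sqrt_b_le ha hb (ξ - η)
    have l3 := sqrt_b_le ha hb η
    have habs : |lamSym a b ξ + lamSym a b (ξ - η) + lamSym a b η|
        = lamSym a b ξ + lamSym a b (ξ - η) + lamSym a b η := by
      rw [_root_.abs_of_nonneg (by linarith)]
    rw [habs]
    have h3b : 3 * Real.sqrt b ≤ lamSym a b ξ + lamSym a b (ξ - η) + lamSym a b η := by
      linarith
    have hmul : (2 * Real.sqrt a / Real.sqrt b) * (3 * Real.sqrt b)
        ≤ (2 * Real.sqrt a / Real.sqrt b) *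
          (lamSym a b ξ + lamSym a b (ξ - η) + lamSym a b η) :=
      mul_le_mul_of_nonneg_left h3b hq.le
    have hval : (2 * Real.sqrt a / Real.sqrt b) * (3 * Real.sqrt b) = 6 * Real.sqrt a := by
      field_simp
      ring
    nlinarith [n1, n2, hmul, hval, mul_nonneg hC0 (by linarith :
      0 ≤ lamSym a b ξ + lamSym a b (ξ - η) + lamSym a b η)]


end
end
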